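/- Let a_0 ≤ a_1 ≤ ⋯ ≤ a_n be real numbers with a_0 < a_n, let c_{a_0}, …, c_{a_n} > 0, l > 0, and weights ω_{a_0}, …, ω_{a_n} > 0, and let 𝒯_{a_i}(t) = ω_{a_i} β_{a_i}(t) / Σ_{j=0}^{n} ω_{a_j} β_{a_j}(t) be the rational GT-Bernstein basis functions. Let a_0 < t_0 < t_1 < ⋯ < t_n < a_n be an increasing sequence, set x_i = (t_i − a_0)/(a_n − t_i) and k_i = a_i − a_0, and let C = [𝒯_{a_j}(t_i)]_{i,j=0}^{n} be the collocation matrix and A = [x_i^{l·k_j}]_{i,j=0}^{n}. Then C is a totally positive matrix if and only if A is a totally positive matrix. -/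

import Mathlib

/-- A real matrix is totally positive if every minor (determinant of the submatrix
obtained by selecting rows `r 0 < r 1 < ⋯` and columns `c 0 < c 1 < ⋯`) is
nonnegative. -/
def IsTotallyPositive {N M : ℕ} (A : Matrix (Fin N) (Fin M) ℝ) : Prop :=
  ∀ (k : ℕ) (r : Fin k → Fin N) (c : Fin k → Fin M),
    StrictMono r → StrictMono c → 0 ≤ (A.submatrix r c).det

/-- The GT-Bernstein basis functions
`β_{a_i}(t) = c_{a_i} (l(t − a_0))^{l(a_i − a_0)} (l(a_n − t))^{l(a_n − a_i)}`,
where powers are real powers (`Real.rpow`, which satisfies `0 ^ 0 = 1`). -/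
noncomputable def gtBernstein (n : ℕ) (a c : Fin (n + 1) → ℝ) (l : ℝ)
    (i : Fin (n + 1)) (t : ℝ) : ℝ :=
  c i * (l * (t - a 0)) ^ (l * (a i - a 0)) *
    (l * (a (Fin.last n) - t)) ^ (l * (a (Fin.last n) - a i))

/-- The rational GT-Bernstein basis functions
`𝒯_{a_i}(t) = ω_{a_i} β_{a_i}(t) / Σ_j ω_{a_j} β_{a_j}(t)`. -/
noncomputable def ratGTBernstein (n : ℕ) (a c : Fin (n + 1) → ℝ) (l : ℝ)
    (ω : Fin (n + 1) → ℝ) (i : Fin (n + 1)) (t : ℝ) : ℝ :=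
  ω i * gtBernstein n a c l i t / ∑ j, ω j * gtBernstein n a c l j t

lemma tp_scale {N : ℕ} (d e : Fin N → ℝ) (hd : ∀ i, 0 < d i) (he : ∀ j, 0 < e j)
    (A : Matrix (Fin N) (Fin N) ℝ) :
    IsTotallyPositive (Matrix.of fun i j => d i * e j * A i j) ↔ IsTotallyPositive A := by
  have key : ∀ (k : ℕ) (r c : Fin k → Fin N),
      ((Matrix.of fun i j => d i * e j * A i j).submatrix r c).det
        = (∏ i, d (r i)) * ((∏ i, e (c i)) * (A.submatrix r c).det) := by
    intro k r c
    have h1 : ((Matrix.of fun i j => d i * e j * A i j).submatrix r c)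
        = Matrix.of fun i j =>
            d (r i) * (Matrix.of fun i j => e (c j) * (A.submatrix r c) i j) i j := by
      ext i j
      simp [Matrix.submatrix, mul_assoc]
    rw [h1, Matrix.det_mul_column, Matrix.det_mul_row]
  constructor
  · intro h k r c hr hc
    have := h k r c hr hc
    rw [key] at this
    have h1 : (0:ℝ) < ∏ i, d (r i) := Finset.prod_pos fun i _ => hd _
    have h2 : (0:ℝ) < ∏ i, e (c i) := Finset.prod_pos fun i _ => he _
    exact ((mul_nonneg_iff_of_pos_left h2).mp ((mul_nonneg_iff_of_pos_left h1).mp this))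
  · intro h k r c hr hc
    rw [key]
    have h1 : (0:ℝ) < ∏ i, d (r i) := Finset.prod_pos fun i _ => hd _
    have h2 : (0:ℝ) < ∏ i, e (c i) := Finset.prod_pos fun i _ => he _
    exact mul_nonneg h1.le (mul_nonneg h2.le (h k r c hr hc))

/-- For nodes `a 0 ≤ a 1 ≤ ⋯ ≤ a n` with `a 0 < a n`, coefficients
`c i > 0`, `l > 0`, weights `ω i > 0`, and an increasing sequence
`a 0 < t 0 < t 1 < ⋯ < t n < a n`, with `x i = (t i − a 0)/(a n − t i)` and
`k i = a i − a 0`, the collocation matrix `C = [𝒯_{a_j}(t_i)]` is totally positive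
if and only if `A = [x i ^ (l * k j)]` is totally positive. -/
theorem ratGTBernstein_collocation_TP_iff
    (n : ℕ) (a c : Fin (n + 1) → ℝ) (l : ℝ) (ω : Fin (n + 1) → ℝ)
    (ha : Monotone a) (ha' : a 0 < a (Fin.last n))
    (hc : ∀ i, 0 < c i) (hl : 0 < l) (hω : ∀ i, 0 < ω i)
    (t : Fin (n + 1) → ℝ) (ht : StrictMono t)
    (ht0 : a 0 < t 0) (htn : t (Fin.last n) < a (Fin.last n)) :
    IsTotallyPositive
        (Matrix.of fun i j : Fin (n + 1) => ratGTBernstein n a c l ω j (t i)) ↔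
      IsTotallyPositive
        (Matrix.of fun i j : Fin (n + 1) =>
          ((t i - a 0) / (a (Fin.last n) - t i)) ^ (l * (a j - a 0))) := by
  set an := a (Fin.last n) with han
  have htlo : ∀ i, a 0 < t i := fun i => lt_of_lt_of_le ht0 (ht.monotone (Fin.zero_le i))
  have hthi : ∀ i, t i < an := fun i => lt_of_le_of_lt (ht.monotone (Fin.le_last i)) htn
  have hp : ∀ i, 0 < l * (t i - a 0) := fun i => mul_pos hl (sub_pos.mpr (htlo i))
  have hq : ∀ i, 0 < l * (an - t i) := fun i => mul_pos hl (sub_pos.mpr (hthi i))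
  have hβ : ∀ j i, 0 < gtBernstein n a c l j (t i) := by
    intro j i
    exact mul_pos (mul_pos (hc j) (Real.rpow_pos_of_pos (hp i) _)) (Real.rpow_pos_of_pos (hq i) _)
  have hS : ∀ i, 0 < ∑ j, ω j * gtBernstein n a c l j (t i) :=
    fun i => Finset.sum_pos (fun j _ => mul_pos (hω j) (hβ j i)) Finset.univ_nonempty
  set d : Fin (n+1) → ℝ := fun i =>
    (l * (an - t i)) ^ (l * (an - a 0)) / ∑ j, ω j * gtBernstein n a c l j (t i) with hdd
  set e : Fin (n+1) → ℝ := fun j => ω j * c j with hee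
  have hd : ∀ i, 0 < d i := fun i => div_pos (Real.rpow_pos_of_pos (hq i) _) (hS i)
  have he : ∀ j, 0 < e j := fun j => mul_pos (hω j) (hc j)
  have hmat : (Matrix.of fun i j : Fin (n + 1) => ratGTBernstein n a c l ω j (t i))
      = Matrix.of (fun i j => d i * e j *
          (((t i - a 0) / (an - t i)) ^ (l * (a j - a 0)))) := by
    ext i j
    simp only [Matrix.of_apply, ratGTBernstein, gtBernstein, hdd, hee]
    have hx : (t i - a 0) / (an - t i) = (l * (t i - a 0)) / (l * (an - t i)) := by
      rw [mul_div_mul_left _ _ (ne_of_gt hl)]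
    rw [hx, Real.div_rpow (hp i).le (hq i).le]
    have hsub : l * (an - a j) = l * (an - a 0) - l * (a j - a 0) := by ring
    rw [hsub, Real.rpow_sub (hq i)]
    field_simp
  rw [hmat]
  exact tp_scale d e hd he _
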